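/- Let n ≥ 2, p > 1, φ₁(x) = ∫_{S^{n-1}} e^{x·ω} dω, and ψ₁(t,x) = e^{-t} φ₁(x). Then there is a constant C > 0 such that for all t > 0, ∫_{|x| ≤ t+1} ψ₁(t,x)^{p/(p-1)} dx ≤ C (1+t)^{(n-1) − (n-1)p/(2(p-1))}. -/

import Mathlib

set_option maxHeartbeats 2000000

open Real MeasureTheory RealInnerProductSpace

/-- The function `φ₁(x) = ∫_{S^{n-1}} e^{x·ω} dω`, integrating over the unit
sphere in `ℝⁿ` with its surface measure. -/
noncomputable def phi1 (n : ℕ) (x : EuclideanSpace ℝ (Fin n)) : ℝ :=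
  ∫ ω : Metric.sphere (0 : EuclideanSpace ℝ (Fin n)) 1,
    Real.exp ⟪x, (ω : EuclideanSpace ℝ (Fin n))⟫ ∂((volume : Measure (EuclideanSpace ℝ (Fin n))).toSphere)

/-- The test function `ψ₁(t,x) = e^{-t} φ₁(x)`. -/
noncomputable def psi1 (n : ℕ) (t : ℝ) (x : EuclideanSpace ℝ (Fin n)) : ℝ :=
  Real.exp (-t) * phi1 n x

lemma phi1_nonneg (n : ℕ) (x : EuclideanSpace ℝ (Fin n)) : 0 ≤ phi1 n x :=
  integral_nonneg fun _ => (Real.exp_pos _).le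

lemma aux_scalar {r m s : ℝ} (hr : 1 ≤ r) (hm0 : 0 < m) (hm1 : m ≤ 1)
    (hsle : s ≤ m) (hsge : -m ≤ s) (hW : 0 ≤ m^2 - s^2) :
    r * (m⁻¹ * s) ≤ r - r/2 * (m^2 - s^2) := by
  have h1 : s/m ≤ 1 - (m^2-s^2)/2 := by
    rw [div_le_iff₀ hm0]
    nlinarith [mul_nonneg (sub_nonneg.2 hsle) (by linarith : (0:ℝ) ≤ 2 - m - s),
      mul_nonneg (sub_nonneg.2 hm1) hW]
  calc r * (m⁻¹ * s) = r * (s/m) := by rw [div_eq_inv_mul]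
    _ ≤ r * (1 - (m^2-s^2)/2) := mul_le_mul_of_nonneg_left h1 (by linarith)
    _ = r - r/2 * (m^2-s^2) := by ring

lemma phi1_le_big (n : ℕ) (hn : 2 ≤ n) (x : EuclideanSpace ℝ (Fin n)) (hx : 1 ≤ ‖x‖) :
    phi1 n x ≤ ((n : ℝ) * (2 * (2 * π) ^ (((n:ℝ) - 1) / 2))) * Real.exp ‖x‖
      * ‖x‖ ^ (-(((n:ℝ) - 1) / 2)) := by
  classical
  haveI : NeZero n := ⟨by omega⟩
  have hx0 : x ≠ 0 := by
    intro h; rw [h, norm_zero] at hx; linarith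
  set r : ℝ := ‖x‖ with hr_def
  have hr1 : (1:ℝ) ≤ r := hx
  have hr0 : (0:ℝ) < r := lt_of_lt_of_le one_pos hr1
  set e : EuclideanSpace ℝ (Fin n) := ‖x‖⁻¹ • x with he_def
  have he : ‖e‖ = 1 := norm_smul_inv_norm hx0
  have hxe : x = r • e := by
    rw [he_def, smul_smul, hr_def, mul_inv_cancel₀ (by positivity), one_smul]
  obtain ⟨b, hb⟩ : ∃ b : OrthonormalBasis (Fin n) ℝ (EuclideanSpace ℝ (Fin n)), b 0 = e := by
    have hcard : Module.finrank ℝ (EuclideanSpace ℝ (Fin n)) = Fintype.card (Fin n) := by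
      simp [finrank_euclideanSpace_fin]
    have hortho : Orthonormal ℝ (({0} : Set (Fin n)).restrict (fun _ : Fin n => e)) := by
      constructor
      · intro i; exact he
      · intro i j hij
        exfalso
        refine hij (Subtype.ext ?_)
        have hi := i.2; have hj := j.2
        simp only [Set.mem_singleton_iff] at hi hj
        rw [hi, hj]
    obtain ⟨b, hb⟩ := hortho.exists_orthonormalBasis_extension_of_card_eq hcard
    exact ⟨b, hb 0 (Set.mem_singleton _)⟩
  set g : Fin n → ℝ → ℝ := fun i s =>
    if i = 0 then (if |s| ≤ 1 then (1:ℝ) else 0) else Real.exp (-(r/2) * s^2) with hg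
  set G : EuclideanSpace ℝ (Fin n) → ℝ := fun y =>
    Real.exp ⟪x, ‖y‖⁻¹ • y⟫ * (if ‖y‖ < 1 then (1:ℝ) else 0) with hG
  set maj : EuclideanSpace ℝ (Fin n) → ℝ := fun y => Real.exp r * ∏ i, g i (b.repr y i)
    with hmaj
  have hdim : Module.finrank ℝ (EuclideanSpace ℝ (Fin n)) = n := finrank_euclideanSpace_fin
  set w : Set.Ioi (0:ℝ) → ℝ := fun v => if (v : ℝ) < 1 then (1:ℝ) else 0 with hw
  -- value of ∫ w
  have h2 : (∫ v : Set.Ioi (0:ℝ), w v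
      ∂(Measure.volumeIoiPow (Module.finrank ℝ (EuclideanSpace ℝ (Fin n)) - 1))) = (n:ℝ)⁻¹ := by
    rw [hdim]
    have hfun : w = Set.indicator (Set.Iio (⟨1, Set.mem_Ioi.2 one_pos⟩ : Set.Ioi (0:ℝ))) (fun _ => (1:ℝ)) := by
      funext rr
      by_cases h : (rr : ℝ) < 1
      · rw [hw]; simp only [if_pos h]
        rw [Set.indicator_of_mem]
        exact h
      · rw [hw]; simp only [if_neg h]
        rw [Set.indicator_of_notMem]
        exact h
    rw [hfun, integral_indicator_const _ measurableSet_Iio, measureReal_def, Measure.volumeIoiPow_apply_Iio]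
    rw [smul_eq_mul, mul_one, ENNReal.toReal_ofReal (by positivity), one_pow]
    have hc : ((n-1:ℕ):ℝ) + 1 = (n:ℝ) := by
      rw [Nat.cast_sub (by omega : 1 ≤ n)]; ring
    rw [hc, one_div]
  -- Step A
  have key : phi1 n x * ((n:ℝ)⁻¹) = ∫ y, G y := by
    calc phi1 n x * ((n:ℝ)⁻¹)
        = (∫ ω : Metric.sphere (0 : EuclideanSpace ℝ (Fin n)) 1,
              Real.exp ⟪x, (ω : EuclideanSpace ℝ (Fin n))⟫
              ∂((volume : Measure (EuclideanSpace ℝ (Fin n))).toSphere))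
          * ∫ v : Set.Ioi (0:ℝ), w v
              ∂(Measure.volumeIoiPow (Module.finrank ℝ (EuclideanSpace ℝ (Fin n)) - 1)) := by
          rw [h2]; rfl
      _ = ∫ z : Metric.sphere (0 : EuclideanSpace ℝ (Fin n)) 1 × Set.Ioi (0:ℝ),
            Real.exp ⟪x, (z.1 : EuclideanSpace ℝ (Fin n))⟫ * w z.2
            ∂(((volume : Measure (EuclideanSpace ℝ (Fin n))).toSphere).prod
              (Measure.volumeIoiPow (Module.finrank ℝ (EuclideanSpace ℝ (Fin n)) - 1))) :=
          (integral_prod_mul _ _).symm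
      _ = ∫ y : (({0}ᶜ : Set (EuclideanSpace ℝ (Fin n)))),
            Real.exp ⟪x, (((homeomorphUnitSphereProd (EuclideanSpace ℝ (Fin n))) y).1 : EuclideanSpace ℝ (Fin n))⟫
              * w ((homeomorphUnitSphereProd (EuclideanSpace ℝ (Fin n))) y).2
            ∂((volume : Measure (EuclideanSpace ℝ (Fin n))).comap Subtype.val) :=
          ((volume : Measure (EuclideanSpace ℝ (Fin n))).measurePreserving_homeomorphUnitSphereProd.integral_comp
            (Homeomorph.measurableEmbedding _) _).symm
      _ = ∫ y : (({0}ᶜ : Set (EuclideanSpace ℝ (Fin n)))), G (y : EuclideanSpace ℝ (Fin n))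
            ∂((volume : Measure (EuclideanSpace ℝ (Fin n))).comap Subtype.val) := by
          refine integral_congr_ae (Filter.Eventually.of_forall fun y => ?_)
          rw [hG, hw]
          simp
      _ = ∫ y in ({0}ᶜ : Set (EuclideanSpace ℝ (Fin n))), G y := by
          exact integral_subtype_comap (measurableSet_singleton 0).compl G
      _ = ∫ y, G y := by rw [restrict_compl_singleton]
  -- nonnegativity facts
  have hgnn : ∀ i s, 0 ≤ g i s := by
    intro i s
    rw [hg]
    by_cases h : i = 0
    · simp only [if_pos h]
      split_ifs <;> norm_num
    · simp only [if_neg h]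
      positivity
  have hmaj_nn : ∀ y, 0 ≤ maj y :=
    fun y => mul_nonneg (Real.exp_pos _).le (Finset.prod_nonneg fun i _ => hgnn _ _)
  have hG_nn : ∀ y, 0 ≤ G y := by
    intro y
    rw [hG]
    apply mul_nonneg (Real.exp_pos _).le
    split_ifs <;> norm_num
  -- pointwise bound G ≤ maj
  have hpoint : ∀ y, G y ≤ maj y := by
    intro y
    by_cases hylt : ‖y‖ < 1
    · by_cases hy0 : y = 0
      · subst hy0
        have hG0 : G 0 = 1 := by
          rw [hG]
          simp
        have hmaj0 : maj 0 = Real.exp r := by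
          rw [hmaj]
          have : ∀ i : Fin n, g i (b.repr 0 i) = 1 := by
            intro i
            rw [hg, map_zero]
            by_cases h : i = 0 <;> simp [h]
          simp only [this, Finset.prod_const_one, mul_one]
        rw [hG0, hmaj0]
        exact Real.one_le_exp (by linarith)
      · have hm0 : (0:ℝ) < ‖y‖ := norm_pos_iff.2 hy0
        set z : EuclideanSpace ℝ (Fin n) := b.repr y with hz
        set m : ℝ := ‖y‖ with hm
        set s : ℝ := z 0 with hs
        have hmz : m ^ 2 = ∑ i, z i ^ 2 := by
          have h1 : ‖z‖ = m := b.repr.norm_map y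
          rw [← h1, EuclideanSpace.norm_eq, Real.sq_sqrt (by positivity)]
          congr 1
          funext i
          rw [Real.norm_eq_abs, sq_abs]
        have hW : ∑ i ∈ Finset.univ.erase 0, z i ^ 2 = m^2 - s^2 := by
          rw [hmz, ← Finset.add_sum_erase Finset.univ _ (Finset.mem_univ 0)]
          rw [← hs]; ring
        have hWnn : 0 ≤ m^2 - s^2 := by
          rw [← hW]
          exact Finset.sum_nonneg fun i _ => sq_nonneg _
        have hs_le : s ≤ m := by nlinarith [sq_nonneg (s - m)]
        have hs_ge : -m ≤ s := by nlinarith [sq_nonneg (s + m)]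
        have hm1 : m ≤ 1 := hylt.le
        have hsz : ⟪e, y⟫ = s := by
          rw [hs, hz, b.repr_apply_apply, hb]
        have hGy : G y = Real.exp (r * (m⁻¹ * ⟪e, y⟫)) := by
          rw [hG]
          simp only [if_pos (show ‖y‖ < 1 from hylt), if_pos hylt, mul_one]
          congr 1
          rw [hxe, real_inner_smul_left, real_inner_smul_right, ← hm]
        have hmajy : maj y = Real.exp (r - r/2 * (m^2 - s^2)) := by
          rw [hmaj]
          simp only
          rw [← Finset.mul_prod_erase Finset.univ _ (Finset.mem_univ 0)]
          have habs : |s| ≤ 1 := abs_le.2 ⟨by linarith, by linarith⟩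
          have h0 : g 0 (b.repr y 0) = 1 := by
            rw [hg]
            simp [← hz, ← hs, habs]
          have h1 : ∀ i ∈ Finset.univ.erase 0, g i (b.repr y i) = Real.exp (-(r/2) * z i ^ 2) := by
            intro i hi
            rw [hg]
            simp only [if_neg (Finset.mem_erase.1 hi).1]; rfl
          rw [h0, one_mul, Finset.prod_congr rfl h1, ← Real.exp_sum, ← Real.exp_add]
          congr 1
          rw [← Finset.mul_sum, hW]
          ring
        rw [hGy, hmajy, hsz]
        exact Real.exp_le_exp.2 (aux_scalar hr1 hm0 hm1 hs_le hs_ge hWnn)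
    · rw [hG]
      simp only [if_neg hylt, mul_zero]
      exact hmaj_nn y
  -- integrability of maj
  have hint_pi : Integrable (fun ww : Fin n → ℝ => ∏ i, g i (ww i)) := by
    apply Integrable.fintype_prod (f := g)
    intro i
    by_cases h : i = 0
    · subst h
      have hgi : g 0 = Set.indicator (Set.Icc (-1:ℝ) 1) (fun _ => (1:ℝ)) := by
        funext sv
        rw [hg]
        simp only [if_pos rfl]
        by_cases h2 : |sv| ≤ 1
        · rw [Set.indicator_of_mem (Set.mem_Icc.2 (abs_le.1 h2))]
          simp [h2]
        · rw [Set.indicator_of_notMem (fun hmem => h2 (abs_le.2 (Set.mem_Icc.1 hmem)))]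
          simp [h2]
      rw [hgi]
      rw [integrable_indicator_iff measurableSet_Icc]
      refine integrableOn_const ?_
      rw [Real.volume_Icc]
      exact ENNReal.ofReal_ne_top
    · have hgi : g i = fun sv => Real.exp (-(r/2) * sv^2) := by
        funext sv; rw [hg]; simp only [if_neg h]
      rw [hgi]
      exact integrable_exp_neg_mul_sq (by positivity : (0:ℝ) < r/2)
  have hint_eu : Integrable (fun zz : EuclideanSpace ℝ (Fin n) => ∏ i, g i (zz i)) := by
    have hmp := EuclideanSpace.volume_preserving_symm_measurableEquiv_toLp (Fin n)
    exact (hmp.integrable_comp_emb (MeasurableEquiv.toLp 2 (Fin n → ℝ)).symm.measurableEmbedding).2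
      hint_pi
  have hint_E : Integrable (fun y : EuclideanSpace ℝ (Fin n) => ∏ i, g i (b.repr y i)) := by
    exact (b.measurePreserving_repr.integrable_comp_emb
      (b.repr.toHomeomorph.measurableEmbedding)).2 hint_eu
  have hint_maj : Integrable maj := by
    rw [hmaj]
    exact hint_E.const_mul _
  -- integral of maj
  have hval : ∫ y, maj y = Real.exp r * (2 * Real.sqrt (π / (r/2)) ^ (n-1)) := by
    rw [hmaj]
    rw [MeasureTheory.integral_const_mul]
    congr 1
    have e1 : ∫ y : EuclideanSpace ℝ (Fin n), ∏ i, g i (b.repr y i)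
        = ∫ zz : EuclideanSpace ℝ (Fin n), ∏ i, g i (zz i) :=
      b.measurePreserving_repr.integral_comp (b.repr.toHomeomorph.measurableEmbedding)
        (fun zz => ∏ i, g i (zz i))
    have e2 : ∫ zz : EuclideanSpace ℝ (Fin n), ∏ i, g i (zz i)
        = ∫ ww : Fin n → ℝ, ∏ i, g i (ww i) :=
      (EuclideanSpace.volume_preserving_symm_measurableEquiv_toLp (Fin n)).integral_comp
        (MeasurableEquiv.toLp 2 (Fin n → ℝ)).symm.measurableEmbedding
        (fun ww => ∏ i, g i (ww i))
    rw [e1, e2, integral_fintype_prod_volume_eq_prod (f := g)]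
    rw [← Finset.mul_prod_erase Finset.univ _ (Finset.mem_univ 0)]
    have e3 : (∫ sv : ℝ, g 0 sv) = 2 := by
      have hgi : g 0 = Set.indicator (Set.Icc (-1:ℝ) 1) (fun _ => (1:ℝ)) := by
        funext sv
        rw [hg]
        simp only [if_pos rfl]
        by_cases h2 : |sv| ≤ 1
        · rw [Set.indicator_of_mem (Set.mem_Icc.2 (abs_le.1 h2))]
          simp [h2]
        · rw [Set.indicator_of_notMem (fun hmem => h2 (abs_le.2 (Set.mem_Icc.1 hmem)))]
          simp [h2]
      rw [hgi, integral_indicator_const _ measurableSet_Icc, measureReal_def, Real.volume_Icc]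
      rw [smul_eq_mul, mul_one, ENNReal.toReal_ofReal (by norm_num)]
      norm_num
    have e4 : ∀ i ∈ Finset.univ.erase (0 : Fin n),
        (∫ sv : ℝ, g i sv) = Real.sqrt (π / (r/2)) := by
      intro i hi
      have hgi : g i = fun sv => Real.exp (-(r/2) * sv^2) := by
        funext sv; rw [hg]; simp only [if_neg (Finset.mem_erase.1 hi).1]
      rw [hgi, integral_gaussian]
    rw [e3, Finset.prod_congr rfl e4, Finset.prod_const,
      Finset.card_erase_of_mem (Finset.mem_univ 0), Finset.card_univ, Fintype.card_fin]
  -- combine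
  have hGle : (∫ y, G y) ≤ ∫ y, maj y :=
    integral_mono_of_nonneg (Filter.Eventually.of_forall hG_nn) hint_maj
      (Filter.Eventually.of_forall hpoint)
  have hcomb : phi1 n x ≤ (n:ℝ) * (Real.exp r * (2 * Real.sqrt (π / (r/2)) ^ (n-1))) := by
    have hn0 : (0:ℝ) < (n:ℝ) := by positivity
    have := mul_le_mul_of_nonneg_left (hval ▸ hGle) hn0.le
    calc phi1 n x = (n:ℝ) * (phi1 n x * ((n:ℝ)⁻¹)) := by
          field_simp
      _ = (n:ℝ) * ∫ y, G y := by rw [key]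
      _ ≤ (n:ℝ) * (Real.exp r * (2 * Real.sqrt (π / (r/2)) ^ (n-1))) := this
  -- final algebra
  have halg : Real.sqrt (π / (r/2)) ^ (n-1)
      = (2*π) ^ (((n:ℝ)-1)/2) * r ^ (-(((n:ℝ)-1)/2)) := by
    have h2r : π / (r/2) = 2*π/r := by
      field_simp
    rw [h2r, Real.sqrt_eq_rpow, ← Real.rpow_natCast ((2*π/r) ^ ((1:ℝ)/2)) (n-1),
      ← Real.rpow_mul (by positivity)]
    have hc : ((1:ℝ)/2) * ((n-1 : ℕ) : ℝ) = ((n:ℝ)-1)/2 := by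
      rw [Nat.cast_sub (by omega : 1 ≤ n)]; push_cast; ring
    rw [hc, Real.div_rpow (by positivity) hr0.le, Real.rpow_neg hr0.le, div_eq_mul_inv]
  calc phi1 n x ≤ (n:ℝ) * (Real.exp r * (2 * Real.sqrt (π / (r/2)) ^ (n-1))) := hcomb
    _ = ((n : ℝ) * (2 * (2 * π) ^ (((n:ℝ) - 1) / 2))) * Real.exp r
        * r ^ (-(((n:ℝ) - 1) / 2)) := by rw [halg]; ring

lemma phi1_le_const' (n : ℕ) (x : EuclideanSpace ℝ (Fin n)) :
    phi1 n x ≤ (((volume : Measure (EuclideanSpace ℝ (Fin n))).toSphere) Set.univ).toReal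
      * Real.exp ‖x‖ := by
  have h : phi1 n x ≤ ∫ _ : Metric.sphere (0 : EuclideanSpace ℝ (Fin n)) 1,
      Real.exp ‖x‖ ∂((volume : Measure (EuclideanSpace ℝ (Fin n))).toSphere) := by
    refine integral_mono_of_nonneg (Filter.Eventually.of_forall fun ω => (Real.exp_pos _).le)
      (integrable_const _) (Filter.Eventually.of_forall fun ω => ?_)
    refine Real.exp_le_exp.2 ?_
    calc ⟪x, (ω : EuclideanSpace ℝ (Fin n))⟫ ≤ ‖x‖ * ‖(ω : EuclideanSpace ℝ (Fin n))‖ :=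
          real_inner_le_norm _ _
      _ = ‖x‖ := by rw [norm_eq_of_mem_sphere ω, mul_one]
  simpa [smul_eq_mul, measureReal_def] using h

lemma phi1_bound (n : ℕ) (hn : 2 ≤ n) : ∃ C > (0:ℝ), ∀ x : EuclideanSpace ℝ (Fin n),
    phi1 n x ≤ C * Real.exp ‖x‖ * (1 + ‖x‖) ^ (-(((n:ℝ)-1)/2)) := by
  set c : ℝ := ((n:ℝ)-1)/2 with hc
  have hn2 : (2:ℝ) ≤ (n:ℝ) := by exact_mod_cast hn
  have hc0 : 0 ≤ c := by rw [hc]; linarith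
  set C1 : ℝ := (n : ℝ) * (2 * (2 * π) ^ c) with hC1
  set C2 : ℝ := (((volume : Measure (EuclideanSpace ℝ (Fin n))).toSphere) Set.univ).toReal
    with hC2
  have hC2nn : 0 ≤ C2 := ENNReal.toReal_nonneg
  have hC1nn : 0 ≤ C1 := by positivity
  have h2c : (0:ℝ) < 2 ^ c := by positivity
  have hbig : (0:ℝ) < (C1 + C2) * 2 ^ c + 1 := by nlinarith
  refine ⟨(C1 + C2) * 2 ^ c + 1, hbig, fun x => ?_⟩
  have hxnn : (0:ℝ) ≤ ‖x‖ := norm_nonneg x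
  have h1x : (0:ℝ) < 1 + ‖x‖ := by linarith
  have hfinal_nn : 0 ≤ Real.exp ‖x‖ * (1+‖x‖) ^ (-c) := by positivity
  by_cases hx : 1 ≤ ‖x‖
  · have h := phi1_le_big n hn x hx
    have hstep : ‖x‖ ^ (-c) ≤ 2 ^ c * (1+‖x‖) ^ (-c) := by
      have h1 : (2 * ‖x‖) ^ (-c) ≤ (1 + ‖x‖) ^ (-c) :=
        Real.rpow_le_rpow_of_nonpos h1x (by linarith) (by linarith)
      have h2 : (2 * ‖x‖) ^ (-c) = 2 ^ (-c) * ‖x‖ ^ (-c) := Real.mul_rpow (by norm_num) hxnn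
      have h3 : (2:ℝ) ^ c * (2:ℝ) ^ (-c) = 1 := by
        rw [← Real.rpow_add (by norm_num)]; simp
      calc ‖x‖ ^ (-c) = 2 ^ c * (2 ^ (-c) * ‖x‖ ^ (-c)) := by
            rw [← mul_assoc, h3, one_mul]
        _ = 2 ^ c * (2*‖x‖) ^ (-c) := by rw [h2]
        _ ≤ 2 ^ c * (1+‖x‖) ^ (-c) := mul_le_mul_of_nonneg_left h1 h2c.le
    calc phi1 n x ≤ C1 * Real.exp ‖x‖ * ‖x‖ ^ (-c) := h
      _ ≤ C1 * Real.exp ‖x‖ * (2 ^ c * (1+‖x‖) ^ (-c)) :=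
          mul_le_mul_of_nonneg_left hstep (by positivity)
      _ = (C1 * 2 ^ c) * (Real.exp ‖x‖ * (1+‖x‖) ^ (-c)) := by ring
      _ ≤ ((C1+C2)*2^c + 1) * (Real.exp ‖x‖ * (1+‖x‖) ^ (-c)) :=
          mul_le_mul_of_nonneg_right (by nlinarith) hfinal_nn
      _ = ((C1+C2)*2^c + 1) * Real.exp ‖x‖ * (1+‖x‖) ^ (-c) := by ring
  · push_neg at hx
    have h := phi1_le_const' n x
    have hone : (1:ℝ) ≤ 2 ^ c * (1+‖x‖) ^ (-c) := by
      have h1 : (1+‖x‖) ^ c ≤ 2 ^ c := Real.rpow_le_rpow h1x.le (by linarith) hc0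
      have h2 : (1+‖x‖) ^ c * (1+‖x‖) ^ (-c) = 1 := by
        rw [← Real.rpow_add h1x]; simp
      calc (1:ℝ) = (1+‖x‖)^c * (1+‖x‖)^(-c) := h2.symm
        _ ≤ 2^c * (1+‖x‖)^(-c) :=
            mul_le_mul_of_nonneg_right h1 (Real.rpow_nonneg h1x.le _)
    calc phi1 n x ≤ C2 * Real.exp ‖x‖ := h
      _ = C2 * Real.exp ‖x‖ * 1 := (mul_one _).symm
      _ ≤ C2 * Real.exp ‖x‖ * (2^c * (1+‖x‖)^(-c)) :=
          mul_le_mul_of_nonneg_left hone (mul_nonneg hC2nn (Real.exp_pos _).le)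
      _ = (C2 * 2^c) * (Real.exp ‖x‖ * (1+‖x‖)^(-c)) := by ring
      _ ≤ ((C1+C2)*2^c + 1) * (Real.exp ‖x‖ * (1+‖x‖)^(-c)) :=
          mul_le_mul_of_nonneg_right (by nlinarith) hfinal_nn
      _ = ((C1+C2)*2^c + 1) * Real.exp ‖x‖ * (1+‖x‖)^(-c) := by ring

lemma aux_poly (a : ℝ) (ha : 0 ≤ a) (q : ℝ) (hq : 0 < q) :
    ∃ c > (0:ℝ), ∀ t ≥ (0:ℝ), (1+t) ^ a ≤ c * Real.exp (q*t/2) := by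
  set m := ⌈a⌉₊ with hm
  refine ⟨(m.factorial : ℝ) * (2/q)^m * Real.exp (q/2), by positivity, fun t ht => ?_⟩
  have h1t : (1:ℝ) ≤ 1+t := by linarith
  have hxe := Real.pow_div_factorial_le_exp (x := q*(1+t)/2) (by positivity) m
  have hfac : (0:ℝ) < (m.factorial : ℝ) := by positivity
  have h2 : (q*(1+t)/2)^m ≤ (m.factorial : ℝ) * Real.exp (q*(1+t)/2) := by
    rw [div_le_iff₀ hfac] at hxe
    linarith [hxe]
  calc (1+t)^a ≤ (1+t) ^ ((m:ℕ):ℝ) := Real.rpow_le_rpow_of_exponent_le h1t (Nat.le_ceil a)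
    _ = (1+t)^(m:ℕ) := Real.rpow_natCast _ m
    _ = (q*(1+t)/2)^m * (2/q)^m := by
        rw [← mul_pow]
        congr 1
        field_simp
    _ ≤ ((m.factorial : ℝ) * Real.exp (q*(1+t)/2)) * (2/q)^m :=
        mul_le_mul_of_nonneg_right h2 (by positivity)
    _ = ((m.factorial : ℝ) * (2/q)^m * Real.exp (q/2)) * Real.exp (q*t/2) := by
        rw [show q*(1+t)/2 = q/2 + q*t/2 by ring, Real.exp_add]
        ring

theorem stmt_8 (n : ℕ) (hn : 2 ≤ n) (p : ℝ) (hp : 1 < p) :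
    ∃ C > (0:ℝ), ∀ t > (0:ℝ),
      (∫ x in Metric.closedBall (0 : EuclideanSpace ℝ (Fin n)) (t + 1),
          psi1 n t x ^ (p / (p - 1)))
        ≤ C * (1 + t) ^ (((n:ℝ) - 1) - ((n:ℝ) - 1) * p / (2 * (p - 1))) := by
  classical
  obtain ⟨C₀, hC₀, hphi⟩ := phi1_bound n hn
  have hp1 : (0:ℝ) < p - 1 := by linarith
  set q : ℝ := p / (p-1) with hq_def
  have hq0 : (0:ℝ) < q := by positivity
  set β : ℝ := ((n:ℝ)-1)/2 with hβ
  have hn2 : (2:ℝ) ≤ (n:ℝ) := by exact_mod_cast hn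
  have hβ0 : (0:ℝ) ≤ β := by rw [hβ]; linarith
  have hqβ : (0:ℝ) ≤ q*β := by positivity
  have hEtgt : ((n:ℝ)-1) - ((n:ℝ)-1)*p/(2*(p-1)) = ((n:ℝ)-1) - q*β := by
    rw [hq_def, hβ]
    congr 1
    field_simp
  obtain ⟨c₁, hc₁, hpoly⟩ := aux_poly (1 + q*β) (by linarith) q hq0
  set c₂ : ℝ := 2^(q*β) * Real.exp q / q with hc₂def
  have hc₂ : (0:ℝ) < c₂ := by positivity
  set V : ℝ := ((volume : Measure (EuclideanSpace ℝ (Fin n))) (Metric.ball 0 1)).toReal with hV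
  have hVnn : (0:ℝ) ≤ V := ENNReal.toReal_nonneg
  haveI : NeZero n := ⟨by omega⟩
  haveI : Nontrivial (EuclideanSpace ℝ (Fin n)) := by
    refine nontrivial_of_ne (EuclideanSpace.single (⟨0, by omega⟩ : Fin n) (1:ℝ)) 0 ?_
    intro h
    have h1 := EuclideanSpace.norm_single (𝕜 := ℝ) (⟨0, by omega⟩ : Fin n) (1:ℝ)
    rw [h, norm_zero, norm_one] at h1
    exact zero_ne_one h1
  have hdim : Module.finrank ℝ (EuclideanSpace ℝ (Fin n)) = n := finrank_euclideanSpace_fin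
  refine ⟨C₀^q * ((n:ℝ) * V * (c₁ + c₂)) + 1, by positivity, fun t ht => ?_⟩
  set X : ℝ := 1 + t with hX
  have hX1 : (1:ℝ) < X := by rw [hX]; linarith
  have hX0 : (0:ℝ) < X := by linarith
  have hXnn : (0:ℝ) ≤ X ^ (((n:ℝ)-1) - q*β) := Real.rpow_nonneg hX0.le _
  -- pointwise bound
  have hpt : ∀ x : EuclideanSpace ℝ (Fin n),
      psi1 n t x ^ q ≤ C₀^q * (Real.exp (q*(‖x‖-t)) * (1+‖x‖) ^ (-(q*β))) := by
    intro x
    have h1x : (0:ℝ) < 1 + ‖x‖ := by positivity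
    have hpsi_nn : 0 ≤ psi1 n t x := mul_nonneg (Real.exp_pos _).le (phi1_nonneg n x)
    have hB : psi1 n t x ≤ (C₀ * Real.exp (‖x‖ - t)) * (1+‖x‖) ^ (-β) := by
      have h2 : psi1 n t x ≤ Real.exp (-t) * (C₀ * Real.exp ‖x‖ * (1+‖x‖) ^ (-β)) := by
        rw [psi1]
        exact mul_le_mul_of_nonneg_left (hphi x) (Real.exp_pos _).le
      refine h2.trans (le_of_eq ?_)
      have h3 : Real.exp (-t) * (C₀ * Real.exp ‖x‖ * (1+‖x‖) ^ (-β))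
          = (C₀ * (Real.exp (-t) * Real.exp ‖x‖)) * (1+‖x‖) ^ (-β) := by ring
      rw [h3, ← Real.exp_add, show -t + ‖x‖ = ‖x‖ - t by ring]
    have h3 : psi1 n t x ^ q ≤ ((C₀ * Real.exp (‖x‖-t)) * (1+‖x‖) ^ (-β)) ^ q :=
      Real.rpow_le_rpow hpsi_nn hB hq0.le
    have h4 : ((C₀ * Real.exp (‖x‖-t)) * (1+‖x‖) ^ (-β)) ^ q
        = C₀^q * (Real.exp (q*(‖x‖-t)) * (1+‖x‖) ^ (-(q*β))) := by
      rw [Real.mul_rpow (by positivity) (Real.rpow_nonneg h1x.le _),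
          Real.mul_rpow hC₀.le (Real.exp_pos _).le,
          ← Real.exp_mul, ← Real.rpow_mul h1x.le,
          show (‖x‖-t)*q = q*(‖x‖-t) by ring, show (-β)*q = -(q*β) by ring]
      ring
    rw [h4] at h3
    exact h3
  -- the radial majorant
  set f : ℝ → ℝ := fun u => if u ≤ t+1 then Real.exp (q*(u-t)) * (1+u) ^ (-(q*β)) else 0 with hf
  have hmaj_cont : Continuous (fun x : EuclideanSpace ℝ (Fin n) =>
      C₀^q * (Real.exp (q*(‖x‖-t)) * (1+‖x‖) ^ (-(q*β)))) := by
    refine continuous_const.mul (Continuous.mul ?_ ?_)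
    · exact Real.continuous_exp.comp (by continuity)
    · exact Continuous.rpow_const (continuous_const.add continuous_norm)
        (fun x => Or.inl (by positivity))
  have hstep1 : (∫ x in Metric.closedBall (0 : EuclideanSpace ℝ (Fin n)) (t+1), psi1 n t x ^ q)
      ≤ ∫ x in Metric.closedBall (0 : EuclideanSpace ℝ (Fin n)) (t+1),
          C₀^q * (Real.exp (q*(‖x‖-t)) * (1+‖x‖) ^ (-(q*β))) := by
    refine integral_mono_of_nonneg (Filter.Eventually.of_forall fun x => ?_)
      (hmaj_cont.continuousOn.integrableOn_compact (isCompact_closedBall _ _))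
      (Filter.Eventually.of_forall fun x => hpt x)
    exact Real.rpow_nonneg (mul_nonneg (Real.exp_pos _).le (phi1_nonneg n x)) q
  have hstep2 : (∫ x in Metric.closedBall (0 : EuclideanSpace ℝ (Fin n)) (t+1),
        C₀^q * (Real.exp (q*(‖x‖-t)) * (1+‖x‖) ^ (-(q*β))))
      = C₀^q * ∫ x : EuclideanSpace ℝ (Fin n), f ‖x‖ := by
    rw [setIntegral_congr_fun (μ := volume) measurableSet_closedBall
      (g := fun x : EuclideanSpace ℝ (Fin n) => C₀^q * f ‖x‖) ?_]
    · rw [MeasureTheory.integral_const_mul]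
      congr 1
      exact setIntegral_eq_integral_of_forall_compl_eq_zero fun x hx => by
        have hxg : ¬ ‖x‖ ≤ t+1 := by
          simpa [Metric.mem_closedBall, dist_zero_right] using hx
        exact if_neg hxg
    · intro x hx
      have hxle : ‖x‖ ≤ t+1 := by
        simpa [Metric.mem_closedBall, dist_zero_right] using hx
      have hfx : f ‖x‖ = Real.exp (q*(‖x‖-t)) * (1+‖x‖) ^ (-(q*β)) := if_pos hxle
      show C₀^q * (Real.exp (q*(‖x‖-t)) * (1+‖x‖) ^ (-(q*β))) = C₀^q * f ‖x‖
      rw [hfx]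
  have hstep3 : (∫ x : EuclideanSpace ℝ (Fin n), f ‖x‖)
      = (n:ℝ) * (V * ∫ u in Set.Ioi (0:ℝ), u ^ (n-1) • f u) := by
    rw [integral_fun_norm_addHaar (volume : Measure (EuclideanSpace ℝ (Fin n))) f, hdim]
    rw [nsmul_eq_mul, smul_eq_mul]; rfl
  -- 1d estimates
  set h₀ : ℝ → ℝ := fun u => u^(n-1) * (Real.exp (q*(u-t)) * (1+u) ^ (-(q*β))) with hh₀
  have hcont₀ : ContinuousOn h₀ (Set.Icc 0 (t+1)) := by
    refine ContinuousOn.mul (continuous_pow _).continuousOn (ContinuousOn.mul ?_ ?_)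
    · exact (Real.continuous_exp.comp (by continuity)).continuousOn
    · refine ContinuousOn.rpow_const (continuous_const.add continuous_id').continuousOn ?_
      intro u hu
      have h1 : (0:ℝ) ≤ u := hu.1
      exact Or.inl (by positivity)
  have hio : IntegrableOn h₀ (Set.Ioc 0 (t+1)) :=
    (hcont₀.integrableOn_compact isCompact_Icc).mono_set Set.Ioc_subset_Icc_self
  have hJ1i : IntegrableOn h₀ (Set.Ioc 0 (t/2)) :=
    hio.mono_set (Set.Ioc_subset_Ioc_right (by linarith))
  have hJ2i : IntegrableOn h₀ (Set.Ioc (t/2) (t+1)) :=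
    hio.mono_set (Set.Ioc_subset_Ioc_left (by linarith))
  have hgf : ∀ u ∈ Set.Ioc (0:ℝ) (t+1), u ^ (n-1) • f u = h₀ u := by
    intro u hu
    rw [hf, hh₀, smul_eq_mul]
    simp only [if_pos hu.2]
  have hJeq : (∫ u in Set.Ioi (0:ℝ), u ^ (n-1) • f u)
      = (∫ u in Set.Ioc 0 (t/2), h₀ u) + ∫ u in Set.Ioc (t/2) (t+1), h₀ u := by
    rw [setIntegral_eq_of_subset_of_forall_diff_eq_zero measurableSet_Ioi
      Set.Ioc_subset_Ioi_self (fun u hu => ?_)]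
    · rw [setIntegral_congr_fun measurableSet_Ioc hgf]
      rw [← setIntegral_union (Set.Ioc_disjoint_Ioc_of_le le_rfl) measurableSet_Ioc hJ1i hJ2i]
      rw [Set.Ioc_union_Ioc_eq_Ioc (by linarith) (by linarith)]
    · have : ¬ u ≤ t+1 := by
        rcases hu with ⟨h1, h2⟩
        simp only [Set.mem_Ioc, not_and, not_le] at h2
        exact not_le.2 (h2 h1)
      rw [hf, smul_eq_mul]
      simp only [if_neg this, mul_zero]
  have hJ1 : (∫ u in Set.Ioc (0:ℝ) (t/2), h₀ u) ≤ (t+1)^n * Real.exp (q*(t/2-t)) := by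
    have hb : ∀ u ∈ Set.Ioc (0:ℝ) (t/2), h₀ u ≤ (t+1)^(n-1) * Real.exp (q*(t/2-t)) := by
      intro u hu
      have hu0 : (0:ℝ) < u := hu.1
      have hu2 : u ≤ t/2 := hu.2
      have e1 : u ^ (n-1) ≤ (t+1)^(n-1) := pow_le_pow_left₀ hu0.le (by linarith) _
      have e2 : Real.exp (q*(u-t)) ≤ Real.exp (q*(t/2-t)) :=
        Real.exp_le_exp.2 (mul_le_mul_of_nonneg_left (by linarith) hq0.le)
      have e3 : (1+u) ^ (-(q*β)) ≤ 1 :=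
        Real.rpow_le_one_of_one_le_of_nonpos (by linarith) (by linarith)
      calc h₀ u = u^(n-1) * (Real.exp (q*(u-t)) * (1+u) ^ (-(q*β))) := rfl
        _ ≤ (t+1)^(n-1) * (Real.exp (q*(t/2-t)) * 1) := by
            refine mul_le_mul e1 (mul_le_mul e2 e3 (Real.rpow_nonneg (by linarith) _)
              (Real.exp_pos _).le) ?_ (by positivity)
            exact mul_nonneg (Real.exp_pos _).le (Real.rpow_nonneg (by linarith) _)
        _ = (t+1)^(n-1) * Real.exp (q*(t/2-t)) := by rw [mul_one]
    have hcb : (∫ u in Set.Ioc (0:ℝ) (t/2), h₀ u)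
        ≤ ∫ _ in Set.Ioc (0:ℝ) (t/2), ((t+1)^(n-1) * Real.exp (q*(t/2-t))) := by
      refine setIntegral_mono_on hJ1i ?_ measurableSet_Ioc hb
      refine integrableOn_const ?_
      rw [Real.volume_Ioc]
      exact ENNReal.ofReal_ne_top
    have hcv : (∫ _ in Set.Ioc (0:ℝ) (t/2), ((t+1)^(n-1) * Real.exp (q*(t/2-t))))
        = (t/2) * ((t+1)^(n-1) * Real.exp (q*(t/2-t))) := by
      rw [setIntegral_const, measureReal_def, Real.volume_Ioc, smul_eq_mul]
      congr 1
      rw [ENNReal.toReal_ofReal (by linarith)]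
      ring
    have hle : (t/2) * ((t+1)^(n-1) * Real.exp (q*(t/2-t)))
        ≤ (t+1) * ((t+1)^(n-1) * Real.exp (q*(t/2-t))) := by
      refine mul_le_mul_of_nonneg_right (by linarith) ?_
      positivity
    have hpow : (t+1) * ((t+1)^(n-1) * Real.exp (q*(t/2-t)))
        = (t+1)^n * Real.exp (q*(t/2-t)) := by
      rw [← mul_assoc, ← pow_succ']
      congr 2
      omega
    calc (∫ u in Set.Ioc (0:ℝ) (t/2), h₀ u) ≤ _ := hcb
      _ = _ := hcv
      _ ≤ _ := hle
      _ = _ := hpow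
  have hJ2 : (∫ u in Set.Ioc (t/2) (t+1), h₀ u)
      ≤ ((t+1)^(n-1) * (1+t/2) ^ (-(q*β))) * (Real.exp q / q) := by
    set K : ℝ := (t+1)^(n-1) * (1+t/2) ^ (-(q*β)) with hK
    have hKnn : 0 ≤ K := by positivity
    have hb : ∀ u ∈ Set.Ioc (t/2) (t+1), h₀ u ≤ K * Real.exp (q*(u-t)) := by
      intro u hu
      have hu0 : t/2 < u := hu.1
      have hu2 : u ≤ t+1 := hu.2
      have e1 : u ^ (n-1) ≤ (t+1)^(n-1) := pow_le_pow_left₀ (by linarith) (by linarith) _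
      have e3 : (1+u) ^ (-(q*β)) ≤ (1+t/2) ^ (-(q*β)) :=
        Real.rpow_le_rpow_of_nonpos (by linarith) (by linarith) (by linarith)
      calc h₀ u = (u^(n-1) * (1+u) ^ (-(q*β))) * Real.exp (q*(u-t)) := by
            rw [hh₀]; ring
        _ ≤ K * Real.exp (q*(u-t)) := by
            refine mul_le_mul_of_nonneg_right ?_ (Real.exp_pos _).le
            exact mul_le_mul e1 e3 (Real.rpow_nonneg (by linarith) _) (by positivity)
    have hexp_int : IntegrableOn (fun u => Real.exp (q*(u-t))) (Set.Ioc (t/2) (t+1)) :=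
      ((Real.continuous_exp.comp (by continuity)).continuousOn.integrableOn_compact
        isCompact_Icc).mono_set Set.Ioc_subset_Icc_self
    have hcb : (∫ u in Set.Ioc (t/2) (t+1), h₀ u)
        ≤ ∫ u in Set.Ioc (t/2) (t+1), K * Real.exp (q*(u-t)) :=
      setIntegral_mono_on hJ2i (hexp_int.const_mul K) measurableSet_Ioc hb
    have hexpval : (∫ u in Set.Ioc (t/2) (t+1), Real.exp (q*(u-t))) ≤ Real.exp q / q := by
      rw [← intervalIntegral.integral_of_le (by linarith : t/2 ≤ t+1)]
      have hrw : ∀ u : ℝ, Real.exp (q*(u-t)) = Real.exp (q*u + -(q*t)) := by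
        intro u; congr 1; ring
      simp only [hrw]
      rw [intervalIntegral.integral_comp_mul_add Real.exp hq0.ne' (-(q*t))]
      rw [integral_exp]
      rw [smul_eq_mul]
      have h1 : q*(t+1) + -(q*t) = q := by ring
      rw [h1]
      have h2 : (0:ℝ) < Real.exp (q*(t/2) + -(q*t)) := Real.exp_pos _
      have h3 : Real.exp q - Real.exp (q*(t/2) + -(q*t)) ≤ Real.exp q := by linarith
      calc q⁻¹ * (Real.exp q - Real.exp (q*(t/2) + -(q*t)))
          ≤ q⁻¹ * Real.exp q := mul_le_mul_of_nonneg_left h3 (inv_nonneg.2 hq0.le)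
        _ = Real.exp q / q := (div_eq_inv_mul _ _).symm
    calc (∫ u in Set.Ioc (t/2) (t+1), h₀ u) ≤ _ := hcb
      _ = K * ∫ u in Set.Ioc (t/2) (t+1), Real.exp (q*(u-t)) := MeasureTheory.integral_const_mul K _
      _ ≤ K * (Real.exp q / q) := mul_le_mul_of_nonneg_left hexpval hKnn
  -- subclaim A
  have hsubA : (t+1)^n * Real.exp (q*(t/2-t)) ≤ c₁ * X ^ (((n:ℝ)-1) - q*β) := by
    have hA1 : ((t+1):ℝ)^n = X ^ ((n:ℕ):ℝ) := by
      rw [Real.rpow_natCast, hX, add_comm t 1]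
    have hA2 : X ^ ((n:ℕ):ℝ) = X ^ (1+q*β) * X ^ (((n:ℝ)-1) - q*β) := by
      rw [← Real.rpow_add hX0]
      congr 1
      ring
    have hA3 : X ^ (1+q*β) * Real.exp (q*(t/2-t)) ≤ c₁ := by
      have h5 : Real.exp (q*(t/2-t)) = (Real.exp (q*t/2))⁻¹ := by
        rw [← Real.exp_neg]
        congr 1
        ring
      rw [h5]
      have h6 := hpoly t ht.le
      calc X ^ (1+q*β) * (Real.exp (q*t/2))⁻¹
          ≤ (c₁ * Real.exp (q*t/2)) * (Real.exp (q*t/2))⁻¹ := by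
            refine mul_le_mul_of_nonneg_right ?_ (by positivity)
            rw [hX]
            exact h6
        _ = c₁ := by
            field_simp
    calc (t+1)^n * Real.exp (q*(t/2-t))
        = (X ^ (1+q*β) * Real.exp (q*(t/2-t))) * X ^ (((n:ℝ)-1) - q*β) := by
          rw [hA1, hA2]; ring
      _ ≤ c₁ * X ^ (((n:ℝ)-1) - q*β) := mul_le_mul_of_nonneg_right hA3 hXnn
  -- subclaim B
  have hsubB : ((t+1)^(n-1) * (1+t/2) ^ (-(q*β))) * (Real.exp q / q)
      ≤ c₂ * X ^ (((n:ℝ)-1) - q*β) := by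
    have hB1 : ((1+t/2):ℝ) ^ (-(q*β)) ≤ 2^(q*β) * X ^ (-(q*β)) := by
      have h1 : ((1+t/2):ℝ) ^ (-(q*β)) ≤ (X/2) ^ (-(q*β)) :=
        Real.rpow_le_rpow_of_nonpos (by rw [hX]; linarith) (by rw [hX]; linarith) (by linarith)
      have h2 : ((X/2):ℝ) ^ (-(q*β)) = 2^(q*β) * X ^ (-(q*β)) := by
        rw [Real.div_rpow hX0.le (by norm_num), Real.rpow_neg (by norm_num : (0:ℝ) ≤ 2),
          div_eq_mul_inv, inv_inv, mul_comm]
      rw [← h2]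
      exact h1
    have hB2 : ((t+1):ℝ)^(n-1) = X ^ ((n:ℝ)-1) := by
      have : ((n-1:ℕ):ℝ) = (n:ℝ)-1 := by
        rw [Nat.cast_sub (by omega : 1 ≤ n), Nat.cast_one]
      rw [← this, Real.rpow_natCast, hX, add_comm t 1]
    calc ((t+1)^(n-1) * (1+t/2) ^ (-(q*β))) * (Real.exp q / q)
        = (X ^ ((n:ℝ)-1) * (Real.exp q / q)) * (1+t/2) ^ (-(q*β)) := by
          rw [hB2]; ring
      _ ≤ (X ^ ((n:ℝ)-1) * (Real.exp q / q)) * (2^(q*β) * X ^ (-(q*β))) := by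
          refine mul_le_mul_of_nonneg_left hB1 ?_
          positivity
      _ = c₂ * (X ^ ((n:ℝ)-1) * X ^ (-(q*β))) := by
          rw [hc₂def]; ring
      _ = c₂ * X ^ (((n:ℝ)-1) - q*β) := by
          have hxx : X ^ ((n:ℝ)-1) * X ^ (-(q*β)) = X ^ (((n:ℝ)-1) - q*β) := by
            rw [← Real.rpow_add hX0]
            congr 1
            try ring
          rw [hxx]
  -- total
  have hJ : (∫ u in Set.Ioi (0:ℝ), u ^ (n-1) • f u) ≤ (c₁ + c₂) * X ^ (((n:ℝ)-1) - q*β) := by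
    rw [hJeq]
    calc (∫ u in Set.Ioc 0 (t/2), h₀ u) + ∫ u in Set.Ioc (t/2) (t+1), h₀ u
        ≤ ((t+1)^n * Real.exp (q*(t/2-t)))
          + ((t+1)^(n-1) * (1+t/2) ^ (-(q*β))) * (Real.exp q / q) := add_le_add hJ1 hJ2
      _ ≤ c₁ * X ^ (((n:ℝ)-1) - q*β) + c₂ * X ^ (((n:ℝ)-1) - q*β) := add_le_add hsubA hsubB
      _ = (c₁ + c₂) * X ^ (((n:ℝ)-1) - q*β) := by ring
  rw [hEtgt]
  calc (∫ x in Metric.closedBall (0 : EuclideanSpace ℝ (Fin n)) (t+1), psi1 n t x ^ q)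
      ≤ ∫ x in Metric.closedBall (0 : EuclideanSpace ℝ (Fin n)) (t+1),
          C₀^q * (Real.exp (q*(‖x‖-t)) * (1+‖x‖) ^ (-(q*β))) := hstep1
    _ = C₀^q * ∫ x : EuclideanSpace ℝ (Fin n), f ‖x‖ := hstep2
    _ = C₀^q * ((n:ℝ) * (V * ∫ u in Set.Ioi (0:ℝ), u ^ (n-1) • f u)) := by rw [hstep3]
    _ ≤ C₀^q * ((n:ℝ) * (V * ((c₁ + c₂) * X ^ (((n:ℝ)-1) - q*β)))) := by
        refine mul_le_mul_of_nonneg_left ?_ (by positivity)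
        refine mul_le_mul_of_nonneg_left ?_ (by positivity)
        exact mul_le_mul_of_nonneg_left hJ hVnn
    _ = (C₀^q * ((n:ℝ) * V * (c₁ + c₂))) * X ^ (((n:ℝ)-1) - q*β) := by ring
    _ ≤ (C₀^q * ((n:ℝ) * V * (c₁ + c₂)) + 1) * X ^ (((n:ℝ)-1) - q*β) := by
        refine mul_le_mul_of_nonneg_right (by linarith) hXnn
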